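/- Let w be a C² traveling wave as above with quadratic entropy: then the entropy dissipation satisfies -λ((u_+²-u_-²)/2) + F(u_+) - F(u_-) = -α ∫_ℝ |w'(y)|^{p+2} dy ≤ 0, where F' (u) = u f'(u). In particular, the limiting shock satisfies the entropy inequality for U(u)=u²/2. -/

import Mathlib

open Filter MeasureTheory intervalIntegral Set

/-- for a traveling wave with quadratic entropy, the entropy
dissipation equals `-α ∫ |w'|^{p+2}` and is nonpositive. -/
theorem stmt11 (f : ℝ → ℝ) (hf : ContDiff ℝ 1 f) (α : ℝ) (hα : 0 < α)
    (p : ℝ) (hp : 0 ≤ p) (lam um up : ℝ)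
    (F : ℝ → ℝ) (hF : ∀ u : ℝ, F u = ∫ v in (0:ℝ)..u, v * deriv f v)
    (w : ℝ → ℝ) (hw : ContDiff ℝ 3 w)
    (hODE : ∀ y : ℝ,
      deriv (deriv w) y + α * |deriv w y| ^ p * deriv w y
        = -lam * (w y - um) + f (w y) - f um)
    (hlimm : Tendsto w atBot (nhds um)) (hlimp : Tendsto w atTop (nhds up))
    (hd1m : Tendsto (deriv w) atBot (nhds 0))
    (hd1p : Tendsto (deriv w) atTop (nhds 0))
    (hd2m : Tendsto (deriv (deriv w)) atBot (nhds 0))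
    (hd2p : Tendsto (deriv (deriv w)) atTop (nhds 0))
    (hInt : Integrable (fun y : ℝ => |deriv w y| ^ (p + 2))) :
    -lam * ((up ^ 2 - um ^ 2) / 2) + F up - F um
        = -α * ∫ y : ℝ, |deriv w y| ^ (p + 2)
      ∧ -lam * ((up ^ 2 - um ^ 2) / 2) + F up - F um ≤ 0 := by
  have rp2 : ∀ x : ℝ, |x| ^ p * x ^ 2 = |x| ^ (p + 2) := by
    intro x
    rcases eq_or_ne x 0 with h | h
    · simp [h, Real.zero_rpow (by positivity : p + 2 ≠ 0)]
    · rw [Real.rpow_add (abs_pos.2 h), show ((2:ℝ)) = ((2:ℕ):ℝ) by norm_num,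
        Real.rpow_natCast, sq_abs]
  have rp1 : ∀ x : ℝ, |x| ^ p * |x| = |x| ^ (p + 1) := by
    intro x
    rcases eq_or_ne x 0 with h | h
    · simp [h, Real.zero_rpow (by positivity : p + 1 ≠ 0)]
    · rw [Real.rpow_add (abs_pos.2 h), Real.rpow_one]
  have hfc : Continuous f := hf.continuous
  have hf'c : Continuous (deriv f) := hf.continuous_deriv le_rfl
  have hwd : Differentiable ℝ w := hw.differentiable (by norm_num)
  have hw1 : Differentiable ℝ (deriv w) := by
    have h : ContDiff ℝ (2+1) w := by norm_num; exact hw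
    exact ((contDiff_succ_iff_deriv.mp h).2.2).differentiable (by norm_num)
  have hw' : ∀ y, HasDerivAt w (deriv w y) y := fun y => (hwd y).hasDerivAt
  have hw'' : ∀ y, HasDerivAt (deriv w) (deriv (deriv w) y) y := fun y => (hw1 y).hasDerivAt
  -- Rankine-Hugoniot
  have hRH : -lam * (up - um) + f up - f um = 0 := by
    have hg : Tendsto (fun y => α * |deriv w y| ^ p * deriv w y) atTop (nhds 0) := by
      have h1 : Tendsto (fun y => |deriv w y| ^ (p + 1)) atTop (nhds 0) := by
        have hc : ContinuousAt (fun x : ℝ => |x| ^ (p + 1)) 0 := by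
          exact (Real.continuousAt_rpow_const _ _ (Or.inr (by positivity))).comp
            continuous_abs.continuousAt
        have := hc.tendsto.comp hd1p
        simpa [Function.comp_def, Real.zero_rpow (by positivity : p + 1 ≠ 0)] using this
      have h2 : Tendsto (fun y => α * |deriv w y| ^ (p + 1)) atTop (nhds 0) := by
        simpa using h1.const_mul α
      apply squeeze_zero_norm _ h2
      intro y
      have : |α * |deriv w y| ^ p * deriv w y| = α * (|deriv w y| ^ p * |deriv w y|) := by
        rw [abs_mul, abs_mul, abs_of_pos hα, abs_of_nonneg (Real.rpow_nonneg (abs_nonneg _) p),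
          mul_assoc]
      rw [Real.norm_eq_abs, this, rp1]
    have hL : Tendsto (fun y => deriv (deriv w) y + α * |deriv w y| ^ p * deriv w y)
        atTop (nhds 0) := by simpa using hd2p.add hg
    have hR : Tendsto (fun y => -lam * (w y - um) + f (w y) - f um)
        atTop (nhds (-lam * (up - um) + f up - f um)) := by
      have : ContinuousAt (fun u : ℝ => -lam * (u - um) + f u - f um) up := by fun_prop
      exact this.tendsto.comp hlimp
    have : Tendsto (fun y => deriv (deriv w) y + α * |deriv w y| ^ p * deriv w y)
        atTop (nhds (-lam * (up - um) + f up - f um)) := by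
      simpa only [hODE] using hR
    exact (tendsto_nhds_unique hL this).symm
  -- primitive Φ of f - f um starting from um
  set Φ : ℝ → ℝ := fun u => ∫ v in um..u, (f v - f um) with hΦdef
  have hgc : Continuous (fun v => f v - f um) := by fun_prop
  have hΦ : ∀ u, HasDerivAt Φ (f u - f um) u := by
    intro u
    exact intervalIntegral.integral_hasDerivAt_right
      (hgc.intervalIntegrable _ _)
      hgc.aestronglyMeasurable.stronglyMeasurableAtFilter
      hgc.continuousAt
  have hΦc : Continuous Φ := by
    have : ∀ u, DifferentiableAt ℝ Φ u := fun u => (hΦ u).differentiableAt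
    exact (fun u => (this u).continuousAt) |> continuous_iff_continuousAt.mpr
  -- energy function
  set H : ℝ → ℝ := fun y => (deriv w y) ^ 2 / 2 + lam * (w y - um) ^ 2 / 2 - Φ (w y) with hHdef
  have hH : ∀ y, HasDerivAt H (-(α * |deriv w y| ^ (p + 2))) y := by
    intro y
    have hs : HasDerivAt (fun y => w y - um) (deriv w y) y := (hw' y).sub_const um
    have h3 : HasDerivAt (fun y => Φ (w y)) ((f (w y) - f um) * deriv w y) y :=
      (hΦ (w y)).comp y (hw' y)
    have hcomb := ((((hw'' y).pow 2).div_const 2).add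
      (((hs.pow 2).const_mul lam).div_const 2)).sub h3
    have heq : (2 : ℕ) * deriv w y ^ (2 - 1) * deriv (deriv w) y / 2
        + lam * ((2 : ℕ) * (w y - um) ^ (2 - 1) * deriv w y) / 2
        - (f (w y) - f um) * deriv w y = -(α * |deriv w y| ^ (p + 2)) := by
      have h := hODE y
      have hd2 : deriv (deriv w) y
          = -lam * (w y - um) + f (w y) - f um - α * |deriv w y| ^ p * deriv w y := by
        linarith
      rw [hd2, ← rp2 (deriv w y)]
      push_cast
      ring
    exact heq ▸ hcomb
  -- limits of H
  have hΦum : Φ um = 0 := by simp [hΦdef]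
  have hHbot : Tendsto H atBot (nhds 0) := by
    have h1 : Tendsto (fun y => (deriv w y) ^ 2 / 2) atBot (nhds 0) := by
      have := (hd1m.mul hd1m).div_const 2
      simpa [pow_two] using this
    have h2 : Tendsto (fun y => lam * (w y - um) ^ 2 / 2) atBot (nhds 0) := by
      have hs : Tendsto (fun y => w y - um) atBot (nhds 0) := by
        simpa using hlimm.sub_const um
      have := ((hs.mul hs).const_mul lam).div_const 2
      simpa [pow_two] using this
    have h3 : Tendsto (fun y => Φ (w y)) atBot (nhds 0) := by
      have := (hΦc.continuousAt (x := um)).tendsto.comp hlimm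
      simpa [Function.comp_def, hΦum] using this
    simpa using (h1.add h2).sub h3
  have hHtop : Tendsto H atTop (nhds (lam * (up - um) ^ 2 / 2 - Φ up)) := by
    have h1 : Tendsto (fun y => (deriv w y) ^ 2 / 2) atTop (nhds 0) := by
      have := (hd1p.mul hd1p).div_const 2
      simpa [pow_two] using this
    have h2 : Tendsto (fun y => lam * (w y - um) ^ 2 / 2)
        atTop (nhds (lam * (up - um) ^ 2 / 2)) := by
      have hs : Tendsto (fun y => w y - um) atTop (nhds (up - um)) := hlimp.sub_const um
      have := ((hs.mul hs).const_mul lam).div_const 2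
      simpa [pow_two] using this
    have h3 : Tendsto (fun y => Φ (w y)) atTop (nhds (Φ up)) :=
      (hΦc.continuousAt (x := up)).tendsto.comp hlimp
    have := (h1.add h2).sub h3
    simpa using this
  -- integrate
  have hint : Integrable (fun y : ℝ => -(α * |deriv w y| ^ (p + 2))) :=
    (hInt.const_mul α).neg
  have hkey : ∫ y : ℝ, -(α * |deriv w y| ^ (p + 2))
      = (lam * (up - um) ^ 2 / 2 - Φ up) - 0 :=
    MeasureTheory.integral_of_hasDerivAt_of_tendsto hH hint hHbot hHtop
  have hkey2 : -α * ∫ y : ℝ, |deriv w y| ^ (p + 2)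
      = lam * (up - um) ^ 2 / 2 - Φ up := by
    rw [neg_mul, ← MeasureTheory.integral_const_mul, ← MeasureTheory.integral_neg]
    simpa using hkey
  -- compute F via integration by parts
  have hparts : ∀ u : ℝ, F u = u * f u - ∫ v in (0:ℝ)..u, f v := by
    intro u
    rw [hF]
    have := integral_mul_deriv_eq_deriv_mul_of_hasDerivAt (u := fun x : ℝ => x) (v := f)
      (u' := fun _ => (1:ℝ)) (v' := deriv f) (a := 0) (b := u)
      (continuous_id.continuousOn) (hfc.continuousOn)
      (fun x _ => hasDerivAt_id x)
      (fun x _ => (hf.differentiable one_ne_zero).differentiableAt.hasDerivAt)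
      (continuous_const.intervalIntegrable _ _) (hf'c.intervalIntegrable _ _)
    simpa using this
  have hsplit : (∫ v in (0:ℝ)..up, f v) - ∫ v in (0:ℝ)..um, f v = ∫ v in um..up, f v := by
    have h := intervalIntegral.integral_add_adjacent_intervals (μ := volume) (a := (0:ℝ)) (b := um)
      (c := up) (hfc.intervalIntegrable _ _) (hfc.intervalIntegrable _ _)
    linarith
  have hΦup : Φ up = (∫ v in um..up, f v) - (up - um) * f um := by
    rw [hΦdef]
    simp only
    rw [intervalIntegral.integral_sub (hfc.intervalIntegrable _ _)
      (intervalIntegrable_const), intervalIntegral.integral_const]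
    simp [smul_eq_mul]
  -- final algebra
  have hmain : -lam * ((up ^ 2 - um ^ 2) / 2) + F up - F um
      = -α * ∫ y : ℝ, |deriv w y| ^ (p + 2) := by
    rw [hkey2, hparts, hparts, hΦup]
    linear_combination up * hRH - hsplit
  refine ⟨hmain, ?_⟩
  rw [hmain]
  have hpos : 0 ≤ ∫ y : ℝ, |deriv w y| ^ (p + 2) :=
    integral_nonneg (fun y => Real.rpow_nonneg (abs_nonneg _) _)
  have := mul_nonneg hα.le hpos
  linarith
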